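/- Let ℓ ≥ 4 be even. For every integer n > 12ℓ² + 36ℓ + 24, there exists a symmetric complete (ℓ,1)-sum-free set S ⊆ ℤ_n. -/

import Mathlib

/-- The `m`-fold sumset of `S`: all sums of `m` (not necessarily distinct) elements of `S`. -/
def sumset {Γ : Type*} [AddCommMonoid Γ] (m : ℕ) (S : Set Γ) : Set Γ :=
  {x | ∃ f : Fin m → Γ, (∀ i, f i ∈ S) ∧ ∑ i, f i = x}

lemma sum_rep (a b : ℤ) (hab : a ≤ b) :
    ∀ (k : ℕ) (m : ℤ), (k : ℤ) * a ≤ m → m ≤ (k : ℤ) * b →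
    ∃ u : ℕ → ℤ, (∀ i < k, a ≤ u i ∧ u i ≤ b) ∧ ∑ i ∈ Finset.range k, u i = m := by
  intro k
  induction k with
  | zero =>
    intro m h1 h2
    exact ⟨fun _ => 0, by omega, by simpa using by push_cast at h1 h2; omega⟩
  | succ k ih =>
    intro m h1 h2
    have hka : (k : ℤ) * a ≤ (k : ℤ) * b := by
      apply mul_le_mul_of_nonneg_left hab (by positivity)
    have hc1 : ((k + 1 : ℕ) : ℤ) * a = (k : ℤ) * a + a := by push_cast; ring
    have hc2 : ((k + 1 : ℕ) : ℤ) * b = (k : ℤ) * b + b := by push_cast; ring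
    set u0 : ℤ := max a (m - (k : ℤ) * b) with hu0
    have hu0a : a ≤ u0 := le_max_left _ _
    have hu0b : u0 ≤ b := by
      rcases le_total a (m - (k:ℤ)*b) with h | h
      · rw [hu0, max_eq_right h]; omega
      · rw [hu0, max_eq_left h]; omega
    have hm1 : (k : ℤ) * a ≤ m - u0 := by
      rcases le_total a (m - (k:ℤ)*b) with h | h
      · rw [hu0, max_eq_right h]; omega
      · rw [hu0, max_eq_left h]; omega
    have hm2 : m - u0 ≤ (k : ℤ) * b := by
      have : m - (k:ℤ)*b ≤ u0 := le_max_right _ _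
      omega
    obtain ⟨u, hu, hsum⟩ := ih (m - u0) hm1 hm2
    refine ⟨fun i => if i = k then u0 else u i, ?_, ?_⟩
    · intro i hi
      by_cases h : i = k
      · simp [h]; omega
      · simp only [if_neg h]; exact hu i (by omega)
    · rw [Finset.sum_range_succ, if_pos rfl]
      have : ∑ i ∈ Finset.range k, (if i = k then u0 else u i) = ∑ i ∈ Finset.range k, u i := by
        apply Finset.sum_congr rfl
        intro i hi
        rw [if_neg (by simp at hi; omega)]
      rw [this, hsum]; ring

lemma signed_rep (l k : ℕ) (a b m : ℤ) (ha : 1 ≤ a) (hab : a ≤ b) (hk : k ≤ l)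
    (h1 : (k : ℤ) * a - ((l - k : ℕ) : ℤ) * b ≤ m) (h2 : m ≤ (k : ℤ) * b - ((l - k : ℕ) : ℤ) * a) :
    ∃ u : ℕ → ℤ, (∀ i < l, a ≤ |u i| ∧ |u i| ≤ b) ∧ ∑ i ∈ Finset.range l, u i = m := by
  set K : ℤ := ((l - k : ℕ) : ℤ) with hK
  have hKa : K * a ≤ K * b := mul_le_mul_of_nonneg_left hab (by positivity)
  have hka : (k : ℤ) * a ≤ (k : ℤ) * b := mul_le_mul_of_nonneg_left hab (by positivity)
  set m1 : ℤ := max ((k : ℤ) * a) (m + K * a) with hm1def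
  have hm11 : (k : ℤ) * a ≤ m1 := le_max_left _ _
  have hm12 : m1 ≤ (k : ℤ) * b := by
    rcases le_total ((k:ℤ)*a) (m + K*a) with h | h
    · rw [hm1def, max_eq_right h]; omega
    · rw [hm1def, max_eq_left h]; omega
  have hm21 : K * a ≤ m1 - m := by
    have := le_max_right ((k : ℤ) * a) (m + K * a); omega
  have hm22 : m1 - m ≤ K * b := by
    rcases le_total ((k:ℤ)*a) (m + K*a) with h | h
    · rw [hm1def, max_eq_right h]; omega
    · rw [hm1def, max_eq_left h]; omega
  obtain ⟨u1, hu1, hs1⟩ := sum_rep a b hab k m1 hm11 hm12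
  obtain ⟨u2, hu2, hs2⟩ := sum_rep a b hab (l - k) (m1 - m) hm21 hm22
  refine ⟨fun i => if i < k then u1 i else -u2 (i - k), ?_, ?_⟩
  · intro i hi
    by_cases h : i < k
    · simp only [if_pos h]
      have := hu1 i h
      rw [abs_of_pos (by omega)]; omega
    · simp only [if_neg h]
      have := hu2 (i - k) (by omega)
      rw [abs_neg, abs_of_pos (by omega)]; omega
  · rw [Finset.range_eq_Ico, ← Finset.sum_Ico_consecutive _ (Nat.zero_le k) hk]
    have e1 : ∑ i ∈ Finset.Ico 0 k, (if i < k then u1 i else -u2 (i - k)) = m1 := by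
      rw [← hs1, Finset.range_eq_Ico]
      apply Finset.sum_congr rfl
      intro i hi
      simp at hi
      rw [if_pos hi]
    have e2 : ∑ i ∈ Finset.Ico k l, (if i < k then u1 i else -u2 (i - k)) = -(m1 - m) := by
      rw [Finset.sum_Ico_eq_sum_range]
      have : ∀ i ∈ Finset.range (l - k), (if k + i < k then u1 (k+i) else -u2 (k + i - k)) = -u2 i := by
        intro i _
        rw [if_neg (by omega)]
        simp
      rw [Finset.sum_congr rfl this]
      rw [show (∑ x ∈ Finset.range (l-k), -u2 x) = -∑ x ∈ Finset.range (l-k), u2 x by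
        exact Finset.sum_neg_distrib _, hs2]
    rw [e1, e2]; ring

lemma grid1 (σ R h : ℤ) (hσ : 1 ≤ σ) (hR : σ ≤ 2*R + 1) (hh : 0 ≤ h) :
    ∀ v : ℤ, 0 ≤ v → v ≤ h*σ + R → ∃ i : ℤ, 0 ≤ i ∧ i ≤ h ∧ |v - i*σ| ≤ R := by
  intro v hv0 hv1
  set c := v / σ with hc
  set ρ := v % σ with hρ
  have hdecomp : v = σ * c + ρ := (Int.mul_ediv_add_emod v σ).symm
  have hρ0 : 0 ≤ ρ := Int.emod_nonneg v (by omega)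
  have hρσ : ρ < σ := Int.emod_lt_of_pos v (by omega)
  have hc0 : 0 ≤ c := Int.ediv_nonneg hv0 (by omega)
  by_cases hch : h ≤ c
  · refine ⟨h, le_refl _ |>.trans hh |> fun _ => hh, le_refl _, ?_⟩
    have h1 : h * σ ≤ c * σ := mul_le_mul_of_nonneg_right hch (by omega)
    rw [abs_le]
    constructor
    · nlinarith
    · nlinarith
  · push_neg at hch
    by_cases hρR : ρ ≤ R
    · exact ⟨c, hc0, by omega, by rw [abs_le]; constructor <;> nlinarith⟩
    · refine ⟨c + 1, by omega, by omega, ?_⟩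
      rw [abs_le]
      constructor <;> nlinarith

lemma grid2 (σ R lam O : ℤ) (hσ : 1 ≤ σ) (hR : σ ≤ 2*R + 1) (hlam : 1 ≤ lam)
    (hOodd : Odd O) (hσodd : Odd σ) (hlamodd : Odd lam)
    (h1 : -(lam*σ) - 2*R ≤ O) (h2 : O ≤ -1) :
    ∃ t : ℤ, Odd t ∧ 1 ≤ t ∧ t ≤ lam ∧ |O + t*σ| ≤ 2*R := by
  set c := (-O) / (2*σ) with hc
  set ρ := (-O) % (2*σ) with hρ
  have hdecomp : -O = (2*σ) * c + ρ := (Int.mul_ediv_add_emod (-O) (2*σ)).symm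
  have hρ0 : 0 ≤ ρ := Int.emod_nonneg _ (by omega)
  have hρσ : ρ < 2*σ := Int.emod_lt_of_pos _ (by omega)
  have hc0 : 0 ≤ c := Int.ediv_nonneg (by omega) (by omega)
  by_cases hcl : 2*c + 1 ≤ lam
  · refine ⟨2*c + 1, ⟨c, by ring⟩, by omega, hcl, ?_⟩
    have he : O + (2*c+1)*σ = σ - ρ := by linear_combination -hdecomp
    have heven : Even (O + (2*c+1)*σ) := by
      rcases hOodd with ⟨o1, ho1⟩
      rcases hσodd with ⟨s1, hs1⟩
      exact ⟨o1 + (2*c+1)*s1 + c + 1, by rw [ho1, hs1]; ring⟩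
    rw [he] at heven ⊢
    rcases heven with ⟨w, hw⟩
    rw [abs_le]
    omega
  · push_neg at hcl
    refine ⟨lam, hlamodd, hlam, le_refl _, ?_⟩
    have hge : lam + 1 ≤ 2*c := by
      obtain ⟨lm, hlm⟩ := hlamodd
      omega
    have key : (lam + 1) * σ ≤ 2*c*σ := mul_le_mul_of_nonneg_right hge (le_trans zero_le_one hσ)
    rw [abs_le]
    constructor
    · linarith
    · nlinarith [key, hdecomp, hρ0]

lemma abs_add_ge (x y : ℤ) : |x| - |y| ≤ |x + y| := by
  have := abs_sub_abs_le_abs_sub x (-y)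
  simpa using this

lemma keyA (L h ε lam d σ N a b p : ℤ) (hL : 2 ≤ L) (hh : 1 ≤ h)
    (hcase : (ε = 1 ∧ L = 2 * h) ∨ (ε = -1 ∧ L = 2 * h + 1))
    (hlam : lam = 2 * (L - h) - 1)
    (hd : 1 ≤ d) (hσ1 : 1 ≤ σ) (hσle : σ ≤ 2 * (L * d) + 1)
    (hN : N = (2 * L - 1) * σ + (4 * L + 2) * d + 4)
    (hA : a = h * σ + L * d + 1) (hB : b = a + d) (hP : p = a + b)
    (j e v m : ℤ) (hj1 : -L ≤ j) (hj2 : j ≤ L)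
    (he1 : j * p - L * d ≤ e) (he2 : e ≤ j * p + L * d)
    (hv1 : a ≤ |v|) (hv2 : |v| ≤ b)
    (hm : e - v = N * m) : False := by
  have hε : ε = 1 ∨ ε = -1 := by
    rcases hcase with ⟨h1, _⟩ | ⟨h1, _⟩
    · exact Or.inl h1
    · exact Or.inr h1
  have hLcase : L = 2 * h ∨ L = 2 * h + 1 := by
    rcases hcase with ⟨_, h1⟩ | ⟨_, h1⟩
    · exact Or.inl h1
    · exact Or.inr h1
  have f1 : 2 * p = N + ε * σ := by
    rcases hcase with ⟨e1, l1⟩ | ⟨e1, l1⟩ <;>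
      rw [hP, hB, hA, hN, e1, l1] <;> ring
  have fσ0 : (0:ℤ) ≤ σ := by omega
  have fN4 : σ + 4 ≤ N := by
    have t1 : σ ≤ (2*L - 1) * σ := by nlinarith
    have t2 : (0:ℤ) ≤ (4*L + 2) * d := by positivity
    omega
  have fN0 : (0:ℤ) ≤ N := by omega
  have fNp : p + 1 ≤ N := by
    have : ε * σ ≤ σ := by rcases hε with rfl | rfl <;> nlinarith
    omega
  have fhσ : h * σ = a - 1 - L * d := by omega
  have flam : N - lam * σ = 2 * b + 2 * (L * d) + 2 := by
    rw [hN, hlam, hB, hA]; ring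
  have hvw : |v - (j * p - N * m)| ≤ L * d := by
    rw [abs_le]; omega
  rcases Int.even_or_odd j with ⟨i, hji⟩ | ⟨i, hji⟩
  · -- even case
    have hi : -h ≤ i ∧ i ≤ h := by rcases hLcase with l1 | l1 <;> omega
    have weq : j * p - N * m = (i - m) * N + i * (ε * σ) := by
      linear_combination i * f1 + p * hji
    have habsi : |i * (ε * σ)| = |i| * σ := by
      rcases hε with rfl | rfl <;> simp [abs_mul, abs_of_nonneg fσ0]
    have habsi2 : |i| * σ ≤ h * σ :=
      mul_le_mul_of_nonneg_right (abs_le.mpr ⟨hi.1, hi.2⟩) fσ0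
    rw [weq] at hvw
    by_cases hmi : m = i
    · rw [hmi] at hvw
      simp only [sub_self, zero_mul, zero_add] at hvw
      have := abs_sub_abs_le_abs_sub v (i * (ε * σ))
      omega
    · have hne : i - m ≠ 0 := fun hc => hmi (by omega)
      have hq : 1 ≤ |i - m| := by
        have := abs_pos.mpr hne
        omega
      have h1 : N ≤ |(i - m) * N| := by
        rw [abs_mul, abs_of_nonneg fN0]
        have := mul_le_mul_of_nonneg_right hq fN0
        omega
      have h3 := abs_add_ge ((i - m) * N) (i * (ε * σ))
      have h4 := abs_sub_abs_le_abs_sub ((i - m) * N + i * (ε * σ)) v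
      rw [abs_sub_comm] at h4
      omega
  · -- odd case
    have hjlam : -lam ≤ j ∧ j ≤ lam := by rcases hLcase with l1 | l1 <;> omega
    have hne : j - 2 * m ≠ 0 := by omega
    have hq : 1 ≤ |j - 2 * m| := by
      have := abs_pos.mpr hne
      omega
    have w2eq : 2 * (j * p - N * m) = (j - 2*m) * N + j * (ε * σ) := by
      linear_combination j * f1
    have habsj : |j * (ε * σ)| = |j| * σ := by
      rcases hε with rfl | rfl <;> simp [abs_mul, abs_of_nonneg fσ0]
    have habsj2 : |j| * σ ≤ lam * σ :=
      mul_le_mul_of_nonneg_right (abs_le.mpr ⟨hjlam.1, hjlam.2⟩) fσ0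
    have h1 : N ≤ |(j - 2*m) * N| := by
      rw [abs_mul, abs_of_nonneg fN0]
      have := mul_le_mul_of_nonneg_right hq fN0
      omega
    have h3 := abs_add_ge ((j - 2*m) * N) (j * (ε * σ))
    rw [← w2eq] at h3
    have h4 := abs_sub_abs_le_abs_sub (2 * (j * p - N * m)) (2 * v)
    rw [abs_sub_comm] at h4
    have h5 : |2 * v| = 2 * |v| := by rw [abs_mul, abs_two]
    have h6 : |2 * v - 2 * (j * p - N * m)| = |v - (j * p - N * m)| * 2 := by
      rw [show 2 * v - 2 * (j*p - N*m) = (v - (j*p - N*m)) * 2 by ring, abs_mul, abs_two]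
    have h7 : |2 * (j * p - N * m)| = 2 * |j * p - N * m| := by rw [abs_mul, abs_two]
    omega

lemma keyB (L h ε lam d σ N a b p : ℤ) (hL : 2 ≤ L) (hh : 1 ≤ h)
    (hcase : (ε = 1 ∧ L = 2 * h) ∨ (ε = -1 ∧ L = 2 * h + 1))
    (hlam : lam = 2 * (L - h) - 1)
    (hd : 1 ≤ d) (hσ1 : 1 ≤ σ) (hσodd : Odd σ) (hσle : σ ≤ 2 * (L * d) + 1)
    (hN : N = (2 * L - 1) * σ + (4 * L + 2) * d + 4)
    (hA : a = h * σ + L * d + 1) (hB : b = a + d) (hP : p = a + b)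
    (v : ℤ) (hv0 : 0 ≤ v) (hv2 : 2 * v + 1 ≤ N)
    (hnot : v < a ∨ b < v) :
    ∃ j mm e : ℤ, -L ≤ j ∧ j ≤ L ∧ e = v + mm * N ∧
      j * p - L * d ≤ e ∧ e ≤ j * p + L * d := by
  have hε : ε = 1 ∨ ε = -1 := by
    rcases hcase with ⟨h1, _⟩ | ⟨h1, _⟩
    · exact Or.inl h1
    · exact Or.inr h1
  have hLcase : L = 2 * h ∨ L = 2 * h + 1 := by
    rcases hcase with ⟨_, h1⟩ | ⟨_, h1⟩
    · exact Or.inl h1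
    · exact Or.inr h1
  have f1 : 2 * p = N + ε * σ := by
    rcases hcase with ⟨e1, l1⟩ | ⟨e1, l1⟩ <;>
      rw [hP, hB, hA, hN, e1, l1] <;> ring
  have fσ0 : (0:ℤ) ≤ σ := by omega
  have fLd : L ≤ L * d := by nlinarith
  have fσle : σ ≤ 2 * (L * d) + 1 := hσle
  have flam : N - lam * σ = 2 * b + 2 * (L * d) + 2 := by
    rw [hN, hlam, hB, hA]; ring
  have hlam1 : 1 ≤ lam := by rcases hLcase with l1 | l1 <;> omega
  have hlamodd : Odd lam := by
    rcases hLcase with l1 | l1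
    · exact ⟨L - h - 1, by omega⟩
    · exact ⟨L - h - 1, by omega⟩
  have hNodd : Odd N := by
    obtain ⟨s1, hs1⟩ := hσodd
    exact ⟨(2*L-1)*s1 + L + (2*L+1)*d + 1, by rw [hN, hs1]; ring⟩
  rcases hnot with hcase1 | hcase2
  · -- small v: use even arc
    obtain ⟨i, hi0, hih, hiv⟩ := grid1 σ (L*d) h hσ1 fσle (by omega) v hv0 (by omega)
    rw [abs_le] at hiv
    rcases hε with rfl | rfl
    · refine ⟨2 * i, i, v + i * N, ?_, ?_, rfl, ?_, ?_⟩
      · rcases hLcase with l1 | l1 <;> omega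
      · rcases hLcase with l1 | l1 <;> omega
      · have key : v + i * N - (2 * i) * p = v - i * σ := by
          linear_combination (-i) * f1
        linarith [hiv.1]
      · have key : v + i * N - (2 * i) * p = v - i * σ := by
          linear_combination (-i) * f1
        linarith [hiv.2]
    · refine ⟨2 * (-i), -i, v + (-i) * N, ?_, ?_, rfl, ?_, ?_⟩
      · rcases hLcase with l1 | l1 <;> omega
      · rcases hLcase with l1 | l1 <;> omega
      · have key : v + (-i) * N - (2 * (-i)) * p = v - i * σ := by
          linear_combination i * f1
        linarith [hiv.1]
      · have key : v + (-i) * N - (2 * (-i)) * p = v - i * σ := by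
          linear_combination i * f1
        linarith [hiv.2]
  · -- big v: use odd arc
    have hOodd : Odd (2 * v - N) := by
      obtain ⟨w, hw⟩ := hNodd
      exact ⟨v - w - 1, by omega⟩
    obtain ⟨t, htodd, ht1, htlam, htv⟩ := grid2 σ (L*d) lam (2*v - N) hσ1 fσle hlam1
      hOodd hσodd hlamodd (by omega) (by omega)
    obtain ⟨c, hc⟩ := htodd
    subst hc
    rw [abs_le] at htv
    have hlamL : lam ≤ L := by rcases hLcase with l1 | l1 <;> omega
    rcases hε with rfl | rfl
    · -- j = -(2c+1), mm = -c-1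
      refine ⟨-(2*c+1), -c-1, v + (-c-1) * N, ?_, ?_, rfl, ?_, ?_⟩
      · omega
      · omega
      · have key : 2 * ((v + (-c-1) * N) - (-(2*c+1)) * p) = (2*v - N) + (2*c+1) * σ := by
          linear_combination (2*c+1) * f1
        linarith [htv.1]
      · have key : 2 * ((v + (-c-1) * N) - (-(2*c+1)) * p) = (2*v - N) + (2*c+1) * σ := by
          linear_combination (2*c+1) * f1
        linarith [htv.2]
    · -- j = 2c+1, mm = c
      refine ⟨2*c+1, c, v + c * N, ?_, ?_, rfl, ?_, ?_⟩
      · omega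
      · omega
      · have key : 2 * ((v + c * N) - (2*c+1) * p) = (2*v - N) + (2*c+1) * σ := by
          linear_combination (-(2*c+1)) * f1
        linarith [htv.1]
      · have key : 2 * ((v + c * N) - (2*c+1) * p) = (2*v - N) + (2*c+1) * σ := by
          linear_combination (-(2*c+1)) * f1
        linarith [htv.2]

lemma sumset_neg {n : ℕ} (l : ℕ) (S : Set (ZMod n)) (hS : ∀ s ∈ S, -s ∈ S) :
    ∀ x ∈ sumset l S, -x ∈ sumset l S := by
  rintro x ⟨f, hf, hsum⟩
  refine ⟨fun i => -(f i), fun i => hS _ (hf i), ?_⟩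
  rw [← hsum]
  exact Finset.sum_neg_distrib _

theorem odd_main (n l : ℕ) (L h ε lam d σ : ℤ) (hL : 2 ≤ L) (hh : 1 ≤ h)
    (hl : (l : ℤ) = 2 * L)
    (hcase : (ε = 1 ∧ L = 2 * h) ∨ (ε = -1 ∧ L = 2 * h + 1))
    (hlam : lam = 2 * (L - h) - 1)
    (hd : 1 ≤ d) (hσ1 : 1 ≤ σ) (hσodd : Odd σ) (hσle : σ ≤ 2 * (L * d) + 1)
    (hn : (n : ℤ) = (2 * L - 1) * σ + (4 * L + 2) * d + 4) :
    ∃ S : Set (ZMod n),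
      (∀ s ∈ S, -s ∈ S) ∧ sumset l S ∩ S = ∅ ∧ sumset l S ∪ S = Set.univ := by
  set a : ℤ := h * σ + L * d + 1 with hA
  set b : ℤ := a + d with hB
  set p : ℤ := a + b with hP
  have hab : a ≤ b := by omega
  have ha1 : 1 ≤ a := by nlinarith
  have hn0 : 0 < n := by
    have t1 : (0:ℤ) ≤ (2*L - 1) * σ := mul_nonneg (by omega) (by omega)
    have t2 : (0:ℤ) ≤ (4*L + 2) * d := mul_nonneg (by omega) (by omega)
    omega
  haveI : NeZero n := ⟨hn0.ne'⟩
  have hNodd : Odd ((n : ℤ)) := by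
    obtain ⟨s1, hs1⟩ := hσodd
    exact ⟨(2*L-1)*s1 + L + (2*L+1)*d + 1, by rw [hn, hs1]; ring⟩
  have hnodd : Odd n := by rwa [Int.odd_coe_nat] at hNodd
  set S : Set (ZMod n) := {x | ∃ v : ℤ, a ≤ |v| ∧ |v| ≤ b ∧ x = (v : ZMod n)} with hS
  have hsym : ∀ s ∈ S, -s ∈ S := by
    rintro s ⟨v, hv1, hv2, rfl⟩
    exact ⟨-v, by rwa [abs_neg], by rwa [abs_neg], by push_cast; ring⟩
  have hcover : ∀ v : ℤ, 0 ≤ v → 2 * v + 1 ≤ (n : ℤ) → (v < a ∨ b < v) →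
      ((v : ZMod n)) ∈ sumset l S := by
    intro v hv0 hv2 hnot
    obtain ⟨j, mm, e, hj1, hj2, hemm, he1, he2⟩ :=
      keyB L h ε lam d σ (n : ℤ) a b p hL hh hcase hlam hd hσ1 hσodd hσle hn hA hB hP v hv0 hv2 hnot
    have hkex : ∃ k : ℕ, (k : ℤ) = j + L ∧ k ≤ l := by
      refine ⟨(j + L).toNat, Int.toNat_of_nonneg (by omega), ?_⟩
      omega
    obtain ⟨k, hk, hkl⟩ := hkex
    have hlk : ((l - k : ℕ) : ℤ) = L - j := by
      rw [Nat.cast_sub hkl]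
      omega
    have hid1 : (j + L) * a - (L - j) * b = j * p - L * d := by rw [hP, hB]; ring
    have hid2 : (j + L) * b - (L - j) * a = j * p + L * d := by rw [hP, hB]; ring
    obtain ⟨u, hu, hsum⟩ := signed_rep l k a b e ha1 hab hkl
      (by rw [hlk, hk, hid1]; linarith) (by rw [hlk, hk, hid2]; linarith)
    refine ⟨fun i => ((u i : ℤ) : ZMod n), fun i => ⟨u i, (hu i i.isLt).1, (hu i i.isLt).2, rfl⟩, ?_⟩
    have hc1 : ∑ i : Fin l, ((u (i : ℕ) : ℤ) : ZMod n) = ((∑ i ∈ Finset.range l, u i : ℤ) : ZMod n) := by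
      rw [Fin.sum_univ_eq_sum_range (fun i => ((u i : ℤ) : ZMod n)) l]
      push_cast
      rfl
    rw [hc1, hsum, hemm]
    push_cast
    simp
  refine ⟨S, hsym, ?_, ?_⟩
  · -- disjoint
    rw [Set.eq_empty_iff_forall_notMem]
    rintro x ⟨⟨f, hf, hsum⟩, hxS⟩
    obtain ⟨v, hv1, hv2, hxv⟩ := hxS
    choose u hu1 hu2 hfu using fun i => hf i
    classical
    set P : Finset (Fin l) := Finset.univ.filter (fun i => 0 < u i) with hPdef
    set Q : Finset (Fin l) := Finset.univ.filter (fun i => ¬ 0 < u i) with hQdef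
    have hcards : P.card + Q.card = l := by
      rw [hPdef, hQdef, Finset.card_filter_add_card_filter_not]
      simp
    have hkl : P.card ≤ l := by omega
    have hsplit : ∑ i ∈ P, u i + ∑ i ∈ Q, u i = ∑ i, u i :=
      Finset.sum_filter_add_sum_filter_not Finset.univ _ u
    have hB1 : ∑ i ∈ P, u i ≤ P.card • b := by
      apply Finset.sum_le_card_nsmul
      intro i hi
      rw [hPdef, Finset.mem_filter] at hi
      have h2 := hu2 i
      rw [abs_of_pos hi.2] at h2
      exact h2
    have hB2 : P.card • a ≤ ∑ i ∈ P, u i := by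
      apply Finset.card_nsmul_le_sum
      intro i hi
      rw [hPdef, Finset.mem_filter] at hi
      have h1 := hu1 i
      rw [abs_of_pos hi.2] at h1
      exact h1
    have hB3 : ∑ i ∈ Q, u i ≤ Q.card • (-a) := by
      apply Finset.sum_le_card_nsmul
      intro i hi
      rw [hQdef, Finset.mem_filter] at hi
      have h1 := hu1 i
      have hle : u i ≤ 0 := by omega
      rw [abs_of_nonpos hle] at h1
      omega
    have hB4 : Q.card • (-b) ≤ ∑ i ∈ Q, u i := by
      apply Finset.card_nsmul_le_sum
      intro i hi
      rw [hQdef, Finset.mem_filter] at hi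
      have h2 := hu2 i
      have hle : u i ≤ 0 := by omega
      rw [abs_of_nonpos hle] at h2
      omega
    have hxe : x = ((∑ i, u i : ℤ) : ZMod n) := by
      rw [← hsum,
        show (∑ i, f i) = ∑ i : Fin l, ((u i : ℤ) : ZMod n) from
          Finset.sum_congr rfl (fun i _ => hfu i)]
      push_cast
      rfl
    have hdvd : (n : ℤ) ∣ (∑ i, u i - v) := by
      rw [← ZMod.intCast_zmod_eq_zero_iff_dvd, Int.cast_sub, ← hxe, hxv]
      ring
    obtain ⟨m, hm⟩ := hdvd
    have hsP : (P.card : ℤ) * a ≤ ∑ i ∈ P, u i := by rw [← nsmul_eq_mul]; exact hB2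
    have hsP2 : ∑ i ∈ P, u i ≤ (P.card : ℤ) * b := by rw [← nsmul_eq_mul]; exact hB1
    have hsQ : (Q.card : ℤ) * (-b) ≤ ∑ i ∈ Q, u i := by rw [← nsmul_eq_mul]; exact hB4
    have hsQ2 : ∑ i ∈ Q, u i ≤ (Q.card : ℤ) * (-a) := by rw [← nsmul_eq_mul]; exact hB3
    have hQc : (Q.card : ℤ) = 2 * L - (P.card : ℤ) := by
      have : (P.card : ℤ) + (Q.card : ℤ) = (l : ℤ) := by exact_mod_cast congrArg (Nat.cast : ℕ → ℤ) hcards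
      omega
    have hid1 : ((P.card : ℤ) - L) * p - L * d = (P.card : ℤ) * a + (2 * L - (P.card : ℤ)) * (-b) := by
      rw [hP, hB]; ring
    have hid2 : ((P.card : ℤ) - L) * p + L * d = (P.card : ℤ) * b + (2 * L - (P.card : ℤ)) * (-a) := by
      rw [hP, hB]; ring
    have hkP : (P.card : ℤ) ≤ 2 * L := by
      have hcl : (P.card : ℤ) ≤ (l : ℤ) := by exact_mod_cast hkl
      omega
    refine keyA L h ε lam d σ (n : ℤ) a b p hL hh hcase hlam hd hσ1 hσle hn hA hB hP
      ((P.card : ℤ) - L) (∑ i, u i) v m (by omega) (by omega) ?_ ?_ hv1 hv2 hm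
    · rw [hid1, ← hsplit]
      have hQb : (Q.card : ℤ) * (-b) = (2 * L - (P.card : ℤ)) * (-b) := by rw [hQc]
      linarith [hsP, hsQ, hQb]
    · rw [hid2, ← hsplit]
      have hQa : (Q.card : ℤ) * (-a) = (2 * L - (P.card : ℤ)) * (-a) := by rw [hQc]
      linarith [hsP2, hsQ2, hQa]
  · -- union
    rw [Set.eq_univ_iff_forall]
    intro x
    by_cases hxS : x ∈ S
    · exact Or.inr hxS
    · left
      set v : ℤ := x.valMinAbs with hv
      have hvx : ((v : ℤ) : ZMod n) = x := ZMod.coe_valMinAbs x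
      have habs : v.natAbs ≤ n / 2 := ZMod.natAbs_valMinAbs_le x
      have habs2 : 2 * |v| + 1 ≤ (n : ℤ) := by
        obtain ⟨w, hw⟩ := hnodd
        have h1 : |v| = (v.natAbs : ℤ) := Int.abs_eq_natAbs v
        omega
      have hnot : ¬ (a ≤ |v| ∧ |v| ≤ b) := by
        intro hcc
        exact hxS ⟨v, hcc.1, hcc.2, hvx.symm⟩
      rcases le_or_gt 0 v with hv0 | hv0
      · have hres := hcover v hv0 (by rw [abs_of_nonneg hv0] at habs2; omega)
          (by rw [abs_of_nonneg hv0] at hnot; omega)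
        rwa [hvx] at hres
      · have hres := hcover (-v) (by omega) (by rw [abs_of_neg hv0] at habs2; omega)
          (by rw [abs_of_neg hv0] at hnot; omega)
        have h2 := sumset_neg l S hsym _ hres
        have h3 : (((-v : ℤ)) : ZMod n) = -x := by push_cast; rw [hvx]
        rw [h3, neg_neg] at h2
        exact h2

theorem even_main (n l : ℕ) (h2 : 2 ∣ n) (hle : Even l) (hl1 : 1 ≤ l) :
    ∃ S : Set (ZMod n),
      (∀ s ∈ S, -s ∈ S) ∧ sumset l S ∩ S = ∅ ∧ sumset l S ∪ S = Set.univ := by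
  haveI : NeZero l := ⟨by omega⟩
  set φ : ZMod n →+* ZMod 2 := ZMod.castHom h2 (ZMod 2) with hφ
  have hneg1 : (-1 : ZMod 2) = 1 := by decide
  have hzmod2 : ∀ y : ZMod 2, y = 0 ∨ y = 1 := by decide
  refine ⟨{x | φ x = 1}, ?_, ?_, ?_⟩
  · intro s hs
    simp only [Set.mem_setOf_eq] at hs ⊢
    rw [map_neg, hs, hneg1]
  · rw [Set.eq_empty_iff_forall_notMem]
    rintro x ⟨⟨f, hf, hsum⟩, hxS⟩
    simp only [Set.mem_setOf_eq] at hxS hf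
    have h0 : φ x = 0 := by
      rw [← hsum, map_sum]
      rw [Finset.sum_congr rfl (fun i _ => hf i)]
      rw [Finset.sum_const, Finset.card_univ, Fintype.card_fin]
      obtain ⟨c, hc⟩ := hle
      rw [hc]
      simp only [nsmul_eq_mul, mul_one]
      rw [show ((c + c : ℕ) : ZMod 2) = 2 * (c : ZMod 2) by push_cast; ring]
      rw [show (2 : ZMod 2) = 0 by decide, zero_mul]
    rw [hxS] at h0
    exact one_ne_zero h0
  · rw [Set.eq_univ_iff_forall]
    intro x
    rcases hzmod2 (φ x) with h0 | h1
    · left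
      refine ⟨fun i => if i = (0 : Fin l) then x - ((l - 1 : ℕ) : ZMod n) else 1, ?_, ?_⟩
      · intro i
        simp only [Set.mem_setOf_eq]
        split_ifs with hi
        · rw [map_sub, h0, map_natCast]
          have hodd : ¬ (2 ∣ (l - 1)) := by
            obtain ⟨w, hw⟩ := hle
            omega
          have hne : ((l - 1 : ℕ) : ZMod 2) ≠ 0 := by
            rw [Ne, ZMod.natCast_eq_zero_iff]
            exact hodd
          rcases hzmod2 ((l - 1 : ℕ) : ZMod 2) with hz | hz
          · exact absurd hz hne
          · rw [hz, zero_sub, hneg1]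
        · rw [map_one]
      · rw [← Finset.add_sum_erase _ _ (Finset.mem_univ (0 : Fin l)), if_pos rfl]
        have hrest : ∀ i ∈ Finset.univ.erase (0 : Fin l),
            (if i = (0 : Fin l) then x - ((l - 1 : ℕ) : ZMod n) else 1) = (1 : ZMod n) := by
          intro i hi
          rw [if_neg (Finset.ne_of_mem_erase hi)]
        rw [Finset.sum_congr rfl hrest, Finset.sum_const,
          Finset.card_erase_of_mem (Finset.mem_univ _), Finset.card_univ, Fintype.card_fin]
        rw [nsmul_eq_mul, mul_one]
        ring
    · right
      exact h1

lemma param_exists (L : ℤ) (hL : 2 ≤ L) (n : ℕ) (hodd : Odd n)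
    (hn : 48 * L^2 + 72 * L + 25 ≤ (n : ℤ)) :
    ∃ d σ : ℤ, 1 ≤ d ∧ 1 ≤ σ ∧ Odd σ ∧ σ ≤ 2 * (L * d) + 1 ∧
      (n : ℤ) = (2 * L - 1) * σ + (4 * L + 2) * d + 4 := by
  obtain ⟨q, r, hq_eq, hr0, hr1⟩ :
      ∃ q r : ℤ, (n : ℤ) - 2*L - 3 = (4*L+2) * q + r ∧ 0 ≤ r ∧ r < 4*L+2 :=
    ⟨_, _, (Int.mul_ediv_add_emod _ _).symm, Int.emod_nonneg _ (by omega),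
      Int.emod_lt_of_pos _ (by omega)⟩
  obtain ⟨t, ρ, hid_t, hρ0, hρM⟩ :
      ∃ t ρ : ℤ, L^2 * ((n:ℤ) - 4) = (2*L-1) * t + ρ ∧ 0 ≤ ρ ∧ ρ < 2*L-1 :=
    ⟨_, _, (Int.mul_ediv_add_emod _ _).symm, Int.emod_nonneg _ (by omega),
      Int.emod_lt_of_pos _ (by omega)⟩
  obtain ⟨w1, K, hid_w, hK0, hKM⟩ :
      ∃ w K : ℤ, q - ρ = (2*L-1) * w + K ∧ 0 ≤ K ∧ K < 2*L-1 :=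
    ⟨_, _, (Int.mul_ediv_add_emod _ _).symm, Int.emod_nonneg _ (by omega),
      Int.emod_lt_of_pos _ (by omega)⟩
  have hq12 : 12 * L + 2 ≤ q := by
    by_contra hcon
    push_neg at hcon
    have h1 : q ≤ 12*L + 1 := by omega
    have h2 : (4*L+2) * q ≤ (4*L+2) * (12*L+1) := by
      apply mul_le_mul_of_nonneg_left h1 (by omega)
    nlinarith
  set d : ℤ := q - K with hd
  have hd1 : 10 * L + 4 ≤ d := by omega
  set σ : ℤ := -((n:ℤ) - 4) * (2*L+1) + 4 * t - 2 * ρ - (4*L+2) * w1 with hσ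
  have hσeq : (2*L-1) * σ = (n : ℤ) - 4 - (4*L+2) * d := by
    rw [hσ, hd]
    linear_combination (-4 : ℤ) * hid_t + (4*L+2) * hid_w
  have hMσval : (2*L-1) * σ = r + 2*L - 1 + (4*L+2) * K := by
    rw [hσeq, hd]
    linarith [hq_eq]
  have hK4 : (0:ℤ) ≤ (4*L+2) * K := mul_nonneg (by omega) hK0
  have hσ1 : 1 ≤ σ := by
    by_contra hcon
    push_neg at hcon
    have h1 : σ ≤ 0 := by omega
    have h2 : (2*L-1) * σ ≤ 0 := mul_nonpos_of_nonneg_of_nonpos (by omega) h1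
    omega
  have hσle : σ ≤ 2 * (L * d) + 1 := by
    have h1 : (4*L+2) * K ≤ (4*L+2) * (2*L-2) := by
      apply mul_le_mul_of_nonneg_left (by omega) (by omega)
    have h2 : (2*L-1) * σ ≤ 8*L^2 + 2*L - 4 := by nlinarith
    by_contra hcon
    push_neg at hcon
    have h3 : 2 * (L * d) + 2 ≤ σ := by omega
    have h4 : (2*L-1) * (2 * (L * d) + 2) ≤ (2*L-1) * σ :=
      mul_le_mul_of_nonneg_left h3 (by omega)
    have h5 : L * (10*L+4) ≤ L * d := mul_le_mul_of_nonneg_left hd1 (by omega)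
    nlinarith [h4, h5]
  have hσodd : Odd σ := by
    have hMσodd : Odd ((2*L-1) * σ) := by
      obtain ⟨w, hw⟩ := hodd
      have hwz : (n : ℤ) = 2 * (w : ℤ) + 1 := by exact_mod_cast hw
      refine ⟨(w : ℤ) - 2 - (2*L+1)*d, ?_⟩
      rw [hσeq, hwz]
      ring
    exact (Int.odd_mul.mp hMσodd).2
  exact ⟨d, σ, by omega, hσ1, hσodd, hσle, by linarith [hσeq]⟩

theorem stmt4 (ℓ n : ℕ) (hℓe : Even ℓ) (hℓ : 4 ≤ ℓ)
    (hn : 12 * ℓ ^ 2 + 36 * ℓ + 24 < n) :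
    ∃ S : Set (ZMod n),
      (∀ s ∈ S, -s ∈ S) ∧ sumset ℓ S ∩ S = ∅ ∧ sumset ℓ S ∪ S = Set.univ := by
  rcases Nat.even_or_odd n with hne | hno
  · exact even_main n ℓ hne.two_dvd hℓe (by omega)
  · obtain ⟨c, hc⟩ := hℓe
    set L : ℤ := (c : ℤ) with hLdef
    have hL : 2 ≤ L := by
      have : 4 ≤ c + c := by omega
      omega
    have hlc : (ℓ : ℤ) = 2 * L := by rw [hc]; push_cast; ring
    have hbound : 48 * L^2 + 72 * L + 25 ≤ (n : ℤ) := by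
      have h1 : 12 * ℓ ^ 2 + 36 * ℓ + 25 ≤ n := by omega
      have h2 : ((12 * ℓ ^ 2 + 36 * ℓ + 25 : ℕ) : ℤ) ≤ (n : ℤ) := by exact_mod_cast h1
      have h3 : ((12 * ℓ ^ 2 + 36 * ℓ + 25 : ℕ) : ℤ) = 12 * (ℓ:ℤ)^2 + 36 * (ℓ:ℤ) + 25 := by
        push_cast; ring
      rw [h3, hlc] at h2
      nlinarith [h2]
    obtain ⟨d, σ, hd, hσ1, hσodd, hσle, hneq⟩ := param_exists L hL n hno hbound
    rcases Int.even_or_odd L with ⟨hh, hLe⟩ | ⟨hh, hLo⟩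
    · exact odd_main n ℓ L hh 1 (2 * (L - hh) - 1) d σ hL (by omega) hlc
        (Or.inl ⟨rfl, by omega⟩) rfl hd hσ1 hσodd hσle hneq
    · exact odd_main n ℓ L hh (-1) (2 * (L - hh) - 1) d σ hL (by omega) hlc
        (Or.inr ⟨rfl, by omega⟩) rfl hd hσ1 hσodd hσle hneq
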